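/- arXiv:1104.5428 — 4 statements merged into one kernel-verified Lean document; each statement's English description precedes it below -/
import Mathlib

section
/- Let A be an n×n complex matrix and B an n×m complex matrix. There exists an m×n complex matrix K such that A − BK is nilpotent ((A − BK)ⁿ = 0) if and only if for every nonzero complex scalar λ there is no nonzero vector w ∈ ℂⁿ with wᵀA = λwᵀ and wᵀB = 0 (the Popov–Belevitch–Hautus test: rank[A − λI, B] = n for all λ ≠ 0). -/
open Matrix Module Polynomial

namespace Stmt11Aux

variable {n m : ℕ}

/-- Chain of controllability subspaces. -/
noncomputable def V (A : Matrix (Fin n) (Fin n) ℂ) (B : Matrix (Fin n) (Fin m) ℂ) :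
    ℕ → Submodule ℂ (Fin n → ℂ)
  | 0 => ⊥
  | k + 1 => V A B k ⊔ LinearMap.range ((A.mulVecLin ^ k) ∘ₗ B.mulVecLin)

variable (A : Matrix (Fin n) (Fin n) ℂ) (B : Matrix (Fin n) (Fin m) ℂ)

lemma V_le_succ (k : ℕ) : V A B k ≤ V A B (k + 1) := le_sup_left

lemma V_mono : Monotone (V A B) := monotone_nat_of_le_succ (V_le_succ A B)

lemma map_V_le (k : ℕ) : (V A B k).map A.mulVecLin ≤ V A B (k + 1) := by
  induction k with
  | zero => simp [V]
  | succ k ih =>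
    rw [V, Submodule.map_sup]
    apply sup_le (ih.trans (V_le_succ A B _))
    rw [← LinearMap.range_comp, ← LinearMap.comp_assoc, ← Module.End.mul_eq_comp, ← pow_succ']
    exact le_sup_right

lemma V_stab_succ (k : ℕ) (h : V A B k = V A B (k + 1)) : V A B (k + 1) = V A B (k + 2) := by
  refine le_antisymm (V_le_succ A B _) ?_
  show V A B (k+1) ⊔ _ ≤ _
  apply sup_le le_rfl
  have hr : LinearMap.range ((A.mulVecLin ^ (k+1)) ∘ₗ B.mulVecLin)
      = ((LinearMap.range ((A.mulVecLin ^ k) ∘ₗ B.mulVecLin)).map A.mulVecLin) := by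
    rw [← LinearMap.range_comp, ← LinearMap.comp_assoc, ← Module.End.mul_eq_comp, ← pow_succ']
  rw [hr]
  calc ((LinearMap.range ((A.mulVecLin ^ k) ∘ₗ B.mulVecLin)).map A.mulVecLin)
      ≤ (V A B (k+1)).map A.mulVecLin := Submodule.map_mono le_sup_right
    _ = (V A B k).map A.mulVecLin := by rw [← h]
    _ ≤ V A B (k + 1) := map_V_le A B k

lemma V_stab : ∀ k, n ≤ k → V A B k = V A B n := by
  have hex : ∃ k ≤ n, V A B k = V A B (k + 1) := by
    by_contra hc
    push_neg at hc
    have hrank : ∀ k, k ≤ n + 1 → k ≤ Module.finrank ℂ (V A B k) := by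
      intro k hk
      induction k with
      | zero => exact Nat.zero_le _
      | succ k ih =>
        have hk' : k ≤ n := by omega
        have hlt : V A B k < V A B (k + 1) :=
          lt_of_le_of_ne (V_le_succ A B k) (hc k hk')
        have h2 := Submodule.finrank_lt_finrank_of_lt hlt
        have h3 := ih (by omega)
        omega
    have h1 := hrank (n + 1) le_rfl
    have h2 : Module.finrank ℂ (V A B (n + 1)) ≤ n := by
      have h4 := Submodule.finrank_le (V A B (n + 1))
      simpa [Module.finrank_fin_fun] using h4
    omega
  obtain ⟨k₀, hk₀n, hk₀⟩ := hex
  have heq : ∀ d, V A B (k₀ + d) = V A B (k₀ + d + 1) := by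
    intro d
    induction d with
    | zero => exact hk₀
    | succ d ih => exact V_stab_succ A B _ ih
  have hstab : ∀ d, V A B (k₀ + d) = V A B k₀ := by
    intro d
    induction d with
    | zero => rfl
    | succ d ih => rw [show k₀ + (d+1) = k₀ + d + 1 from rfl, ← heq d, ih]
  intro k hk
  have h1 := hstab (k - k₀)
  rw [Nat.add_sub_cancel' (hk₀n.trans hk)] at h1
  have h2 := hstab (n - k₀)
  rw [Nat.add_sub_cancel' hk₀n] at h2
  rw [h1, h2]

/-- States steerable to rest in `k` steps. -/
noncomputable def Nsub (k : ℕ) : Submodule ℂ (Fin n → ℂ) :=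
  (V A B k).comap (A.mulVecLin ^ k)

lemma Nsub_zero : Nsub A B 0 = ⊥ := by
  simp [Nsub, V, Module.End.one_eq_id]

lemma Nsub_le_succ (k : ℕ) : Nsub A B k ≤ Nsub A B (k + 1) := by
  intro x hx
  have hx' : (A.mulVecLin ^ k) x ∈ V A B k := hx
  have : (A.mulVecLin ^ (k+1)) x = A.mulVecLin ((A.mulVecLin ^ k) x) := by
    rw [pow_succ']; rfl
  show (A.mulVecLin ^ (k+1)) x ∈ V A B (k+1)
  rw [this]
  exact map_V_le A B k ⟨_, hx', rfl⟩

lemma Nsub_mono : Monotone (Nsub A B) := monotone_nat_of_le_succ (Nsub_le_succ A B)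

lemma key_step (k : ℕ) : ∀ x ∈ Nsub A B (k + 1), ∃ u, A *ᵥ x - B *ᵥ u ∈ Nsub A B k := by
  intro x hx
  have hx' : (A.mulVecLin ^ (k+1)) x ∈ V A B k ⊔ LinearMap.range ((A.mulVecLin ^ k) ∘ₗ B.mulVecLin) := hx
  rw [Submodule.mem_sup] at hx'
  obtain ⟨v, hv, z, hz, hvz⟩ := hx'
  obtain ⟨u, hu⟩ := hz
  refine ⟨u, ?_⟩
  show (A.mulVecLin ^ k) (A *ᵥ x - B *ᵥ u) ∈ V A B k
  have h1 : (A.mulVecLin ^ k) (A *ᵥ x - B *ᵥ u)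
      = (A.mulVecLin ^ (k+1)) x - ((A.mulVecLin ^ k) ∘ₗ B.mulVecLin) u := by
    rw [map_sub, pow_succ]
    rfl
  rw [h1, hu, ← hvz, add_sub_cancel_right]
  exact hv

/-- An endomorphism of a f.d. complex vector space with no nonzero eigenvalue is
nilpotent with index at most the dimension. -/
lemma pow_finrank_eq_zero_of_no_eigen {M : Type*} [AddCommGroup M] [Module ℂ M]
    [FiniteDimensional ℂ M] (f : Module.End ℂ M)
    (h : ∀ μ : ℂ, μ ≠ 0 → ¬ f.HasEigenvalue μ) :
    f ^ (Module.finrank ℂ M) = 0 := by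
  have hnil : IsNilpotent f := by
    set p := minpoly ℂ f with hp
    have hmo : p.Monic := minpoly.monic (LinearMap.isIntegral f)
    have hsp : p.Splits := IsAlgClosed.splits p
    have hroots : ∀ r ∈ p.roots, r = 0 := by
      intro r hr
      by_contra hr0
      exact h r hr0 (Module.End.hasEigenvalue_of_isRoot
        (Polynomial.isRoot_of_mem_roots hr))
    have hprod := hsp.eq_prod_roots_of_monic hmo
    have hX : p = X ^ p.roots.card := by
      conv_lhs => rw [hprod]
      have : p.roots.map (fun a => X - C a) = Multiset.replicate p.roots.card X := by
        rw [Multiset.eq_replicate]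
        constructor
        · simp
        · intro q hq
          obtain ⟨r, hr, rfl⟩ := Multiset.mem_map.mp hq
          rw [hroots r hr, map_zero, sub_zero]
      rw [this, Multiset.prod_replicate]
    refine ⟨p.roots.card, ?_⟩
    have h0 : (aeval f) p = 0 := by rw [hp]; exact minpoly.aeval ℂ f
    rw [hX] at h0
    simpa only [map_pow, aeval_X] using h0
  rw [LinearMap.isNilpotent_iff_charpoly] at hnil
  simpa only [hnil, map_pow, aeval_X] using f.aeval_self_charpoly

/-- Separation of a point from a subspace by a dot-product functional. -/
lemma exists_sep {n : ℕ} (U : Submodule ℂ (Fin n → ℂ)) {v : Fin n → ℂ} (hv : v ∉ U) :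
    ∃ w : Fin n → ℂ, (∀ u ∈ U, w ⬝ᵥ u = 0) ∧ w ⬝ᵥ v ≠ 0 := by
  have hqv : U.mkQ v ≠ 0 := by
    simpa [Submodule.Quotient.mk_eq_zero] using hv
  obtain ⟨φ, hφ⟩ : ∃ φ : Module.Dual ℂ ((Fin n → ℂ) ⧸ U), φ (U.mkQ v) ≠ 0 := by
    by_contra hc
    push_neg at hc
    exact hqv ((Module.forall_dual_apply_eq_zero_iff ℂ _).mp hc)
  set ψ : (Fin n → ℂ) →ₗ[ℂ] ℂ := φ ∘ₗ U.mkQ with hψ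
  have hdot : ∀ u : Fin n → ℂ, (fun i => ψ (Pi.single i 1)) ⬝ᵥ u = ψ u := by
    intro u
    rw [LinearMap.pi_apply_eq_sum_univ ψ u]
    rw [dotProduct]
    congr 1
    ext i
    rw [smul_eq_mul, mul_comm]
    congr 2
    ext j
    simp [Pi.single_apply, eq_comm]
  refine ⟨fun i => ψ (Pi.single i 1), fun u hu => ?_, ?_⟩
  · rw [hdot u]
    show φ (U.mkQ u) = 0
    rw [Submodule.mkQ_apply, (Submodule.Quotient.mk_eq_zero U).mpr hu, map_zero]
  · rw [hdot v]
    exact hφ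


/-- Annihilator of `V A B n` under the (non-conjugated) dot product. -/
noncomputable def Wann : Submodule ℂ (Fin n → ℂ) where
  carrier := {w | ∀ v ∈ V A B n, w ⬝ᵥ v = 0}
  add_mem' := by
    intro a b ha hb v hv
    rw [add_dotProduct, ha v hv, hb v hv, add_zero]
  zero_mem' := by
    intro v hv
    exact zero_dotProduct v
  smul_mem' := by
    intro c w hw v hv
    rw [smul_dotProduct, hw v hv, smul_zero]

lemma map_V_self : (V A B n).map A.mulVecLin ≤ V A B n :=
  (map_V_le A B n).trans (le_of_eq (V_stab A B (n+1) (by omega)))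

lemma Wann_inv : ∀ w ∈ Wann A B, Aᵀ.mulVecLin w ∈ Wann A B := by
  intro w hw v hv
  have h1 : Aᵀ.mulVecLin w ⬝ᵥ v = w ⬝ᵥ (A *ᵥ v) := by
    rw [mulVecLin_apply, mulVec_transpose, ← dotProduct_mulVec]
  rw [h1]
  exact hw _ (map_V_self A B ⟨v, hv, rfl⟩)

lemma range_B_le (hn : 0 < n) : LinearMap.range B.mulVecLin ≤ V A B n := by
  have h1 : LinearMap.range B.mulVecLin ≤ V A B 1 := by
    show LinearMap.range B.mulVecLin ≤ V A B 0 ⊔ LinearMap.range ((A.mulVecLin ^ 0) ∘ₗ B.mulVecLin)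
    rw [pow_zero, Module.End.one_eq_id, LinearMap.id_comp]
    exact le_sup_right
  exact h1.trans (V_mono A B hn)

lemma pow_mulVecLin (M : Matrix (Fin n) (Fin n) ℂ) (k : ℕ) :
    M.mulVecLin ^ k = (M ^ k).mulVecLin := by
  induction k with
  | zero => simp [Module.End.one_eq_id]
  | succ k ih => rw [pow_succ, pow_succ, mulVecLin_mul, ← ih]; rfl

lemma pow_n_mem_V (hn : 0 < n)
    (hPBH : ∀ lam : ℂ, lam ≠ 0 →
      ¬∃ w : Fin n → ℂ, w ≠ 0 ∧ w ᵥ* A = lam • w ∧ w ᵥ* B = 0) :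
    ∀ x, (A.mulVecLin ^ n) x ∈ V A B n := by
  have hno : ∀ μ : ℂ, μ ≠ 0 → ¬ Module.End.HasEigenvalue (Aᵀ.mulVecLin.restrict (Wann_inv A B) : Module.End ℂ ↥(Wann A B)) μ := by
    intro μ hμ he
    obtain ⟨w, hw⟩ := he.exists_hasEigenvector
    apply hPBH μ hμ
    have h1 : Aᵀ.mulVecLin (w : Fin n → ℂ) = μ • (w : Fin n → ℂ) := by
      have h2 := congrArg Subtype.val hw.apply_eq_smul
      simpa using h2
    refine ⟨(w : Fin n → ℂ), fun h => hw.right (Subtype.ext h), ?_, ?_⟩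
    · rw [← mulVec_transpose, ← mulVecLin_apply, h1]
    · funext j
      have hcol : (fun i => B i j) ∈ V A B n := by
        apply range_B_le A B hn
        exact ⟨Pi.single j 1, by simp [mulVecLin_apply]; rfl⟩
      have h3 : ((w : Fin n → ℂ) ᵥ* B) j = (w : Fin n → ℂ) ⬝ᵥ (fun i => B i j) := rfl
      rw [h3, w.2 _ hcol]
      rfl
  have hpow := pow_finrank_eq_zero_of_no_eigen _ hno
  rw [Module.End.pow_restrict] at hpow
  have hd : Module.finrank ℂ ↥(Wann A B) ≤ n := by
    have h5 := Submodule.finrank_le (Wann A B)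
    simpa [Module.finrank_fin_fun] using h5
  have hWpow : ∀ w ∈ Wann A B, (Aᵀ.mulVecLin ^ n) w = 0 := by
    intro w hw
    have h1 : (Aᵀ.mulVecLin ^ (Module.finrank ℂ ↥(Wann A B))) w = 0 := by
      have h3 := congrArg Subtype.val (LinearMap.ext_iff.mp hpow ⟨w, hw⟩)
      simpa using h3
    rw [← pow_sub_mul_pow _ hd, Module.End.mul_apply, h1, map_zero]
  intro x
  by_contra hx
  obtain ⟨w, hw0, hwv⟩ := exists_sep (V A B n) hx
  apply hwv
  have h4 : w ⬝ᵥ ((A.mulVecLin ^ n) x) = ((Aᵀ.mulVecLin ^ n) w) ⬝ᵥ x := by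
    rw [pow_mulVecLin, pow_mulVecLin, mulVecLin_apply, mulVecLin_apply,
      dotProduct_mulVec, ← transpose_pow, mulVec_transpose]
  rw [h4, hWpow w hw0, zero_dotProduct]

lemma Nsub_top (hn : 0 < n)
    (hPBH : ∀ lam : ℂ, lam ≠ 0 →
      ¬∃ w : Fin n → ℂ, w ≠ 0 ∧ w ᵥ* A = lam • w ∧ w ᵥ* B = 0) :
    ∀ x, x ∈ Nsub A B (2 * n) := by
  have h2 : ∀ k, ∀ v ∈ V A B n, (A.mulVecLin ^ k) v ∈ V A B n := by
    intro k
    induction k with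
    | zero => intro v hv; simpa using hv
    | succ k ih =>
      intro v hv
      rw [pow_succ, Module.End.mul_apply]
      exact ih _ (map_V_self A B ⟨v, hv, rfl⟩)
  intro x
  show (A.mulVecLin ^ (2*n)) x ∈ V A B (2*n)
  rw [V_stab A B (2*n) (by omega), two_mul, pow_add, Module.End.mul_apply]
  exact h2 n _ (pow_n_mem_V A B hn hPBH x)


lemma exists_g (r : ℕ) :
    ∃ g : (Fin n → ℂ) →ₗ[ℂ] (Fin m → ℂ),
      ∀ j ≤ r, ∀ x ∈ Nsub A B j, A *ᵥ x - B *ᵥ g x ∈ Nsub A B (j - 1) := by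
  induction r with
  | zero =>
    refine ⟨0, ?_⟩
    intro j hj x hx
    have hj0 : j = 0 := Nat.le_zero.mp hj
    subst hj0
    rw [Nsub_zero, Submodule.mem_bot] at hx
    subst hx
    simp [Nsub_zero]
  | succ r ih =>
    obtain ⟨g, hg⟩ := ih
    -- a complement `C` of `Nsub r` inside `Nsub (r+1)`
    obtain ⟨C, hCle, hinf, hsup⟩ : ∃ C : Submodule ℂ (Fin n → ℂ),
        C ≤ Nsub A B (r+1) ∧ Nsub A B r ⊓ C = ⊥ ∧ Nsub A B r ⊔ C = Nsub A B (r+1) := by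
      obtain ⟨q, hq⟩ := Submodule.exists_isCompl
        ((Nsub A B r).comap (Nsub A B (r+1)).subtype)
      refine ⟨q.map (Nsub A B (r+1)).subtype, Submodule.map_subtype_le _ _, ?_, ?_⟩
      · rw [eq_bot_iff]
        rintro x hx
        rw [Submodule.mem_inf] at hx
        obtain ⟨hxr, hxC⟩ := hx
        obtain ⟨w, hwq, rfl⟩ := hxC
        have hw2 : w ∈ ((Nsub A B r).comap (Nsub A B (r+1)).subtype) ⊓ q := ⟨hxr, hwq⟩
        rw [hq.inf_eq_bot, Submodule.mem_bot] at hw2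
        rw [hw2]
        simp
      · have h1 : (((Nsub A B r).comap (Nsub A B (r+1)).subtype) ⊔ q).map
            (Nsub A B (r+1)).subtype
            = (⊤ : Submodule ℂ ↥(Nsub A B (r+1))).map (Nsub A B (r+1)).subtype := by
          rw [hq.sup_eq_top]
        rw [Submodule.map_sup, Submodule.map_comap_subtype, Submodule.map_subtype_top,
          inf_eq_right.mpr (Nsub_le_succ A B r)] at h1
        exact h1
    obtain ⟨D, hD⟩ := Submodule.exists_isCompl (Nsub A B (r+1))
    have hc1 : IsCompl (Nsub A B r) (C ⊔ D) := by
      constructor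
      · rw [disjoint_iff, eq_bot_iff]
        rintro x hx
        rw [Submodule.mem_inf] at hx
        obtain ⟨hxr, hxCD⟩ := hx
        rw [Submodule.mem_sup] at hxCD
        obtain ⟨c, hc, d, hd, rfl⟩ := hxCD
        have hdm : d ∈ Nsub A B (r+1) ⊓ D := by
          refine ⟨?_, hd⟩
          have h2 : c + d - c ∈ Nsub A B (r+1) :=
            Submodule.sub_mem _ ((Nsub_le_succ A B r) hxr) (hCle hc)
          simpa using h2
        rw [hD.inf_eq_bot, Submodule.mem_bot] at hdm
        rw [hdm, add_zero] at hxr ⊢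
        have h3 : c ∈ Nsub A B r ⊓ C := ⟨hxr, hc⟩
        rw [hinf] at h3
        exact h3
      · rw [codisjoint_iff, ← sup_assoc, hsup, hD.sup_eq_top]
    have hc2 : IsCompl C (Nsub A B r ⊔ D) := by
      constructor
      · rw [disjoint_iff, eq_bot_iff]
        rintro x hx
        rw [Submodule.mem_inf] at hx
        obtain ⟨hxC, hxND⟩ := hx
        rw [Submodule.mem_sup] at hxND
        obtain ⟨y, hy, d, hd, rfl⟩ := hxND
        have hdm : d ∈ Nsub A B (r+1) ⊓ D := by
          refine ⟨?_, hd⟩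
          have h2 : y + d - y ∈ Nsub A B (r+1) :=
            Submodule.sub_mem _ (hCle hxC) ((Nsub_le_succ A B r) hy)
          simpa using h2
        rw [hD.inf_eq_bot, Submodule.mem_bot] at hdm
        rw [hdm, add_zero] at hxC ⊢
        have h3 : y ∈ Nsub A B r ⊓ C := ⟨hy, hxC⟩
        rw [hinf] at h3
        exact h3
      · rw [codisjoint_iff, sup_left_comm, ← sup_assoc, hsup, hD.sup_eq_top]
    -- linear choice of controls on `C`
    obtain ⟨h, hh⟩ : ∃ h : ↥C →ₗ[ℂ] (Fin m → ℂ),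
        ∀ c : ↥C, A *ᵥ (c : Fin n → ℂ) - B *ᵥ h c ∈ Nsub A B r := by
      let bC := Basis.ofVectorSpace ℂ ↥C
      refine ⟨bC.constr ℂ (fun i => Classical.choose (key_step A B r _ (hCle (bC i).2))), ?_⟩
      intro c
      set h := bC.constr ℂ (fun i => Classical.choose (key_step A B r _ (hCle (bC i).2)))
        with hhdef
      let φ : ↥C →ₗ[ℂ] (Fin n → ℂ) := A.mulVecLin ∘ₗ C.subtype - B.mulVecLin ∘ₗ h
      have hφb : ∀ i, φ (bC i) ∈ Nsub A B r := by
        intro i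
        have hspec := Classical.choose_spec (key_step A B r _ (hCle (bC i).2))
        simpa [φ, hhdef, Basis.constr_basis] using hspec
      have hrange : LinearMap.range φ ≤ Nsub A B r := by
        rw [LinearMap.range_eq_map, ← bC.span_eq, Submodule.map_span, Submodule.span_le]
        rintro y ⟨z, ⟨i, rfl⟩, rfl⟩
        exact hφb i
      have h5 := hrange ⟨c, rfl⟩
      simpa [φ] using h5
    set π₁ := Submodule.projectionOnto _ _ hc1 with hπ₁def
    set π₂ := Submodule.projectionOnto _ _ hc2 with hπ₂def
    refine ⟨g ∘ₗ ((Nsub A B r).subtype ∘ₗ π₁) + h ∘ₗ π₂, ?_⟩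
    intro j hj x hx
    rcases Nat.lt_or_ge j (r+1) with hlt | hge
    · have hxr : x ∈ Nsub A B r := Nsub_mono A B (by omega : j ≤ r) hx
      have hπ1 : π₁ x = ⟨x, hxr⟩ := Submodule.linearProjOfIsCompl_apply_left hc1 ⟨x, hxr⟩
      have hπ2 : π₂ x = 0 :=
        Submodule.linearProjOfIsCompl_apply_right' hc2 (Submodule.mem_sup_left hxr)
      have hgx : (g ∘ₗ ((Nsub A B r).subtype ∘ₗ π₁) + h ∘ₗ π₂) x = g x := by
        simp [hπ1, hπ2]
      rw [hgx]
      exact hg j (by omega) x hx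
    · have hj' : j = r + 1 := by omega
      subst hj'
      have hx' : x ∈ Nsub A B r ⊔ C := by rw [hsup]; exact hx
      rw [Submodule.mem_sup] at hx'
      obtain ⟨y, hy, c, hc, rfl⟩ := hx'
      have hπ1 : π₁ (y + c) = ⟨y, hy⟩ := by
        rw [map_add,
          Submodule.linearProjOfIsCompl_apply_right' hc1
            (Submodule.mem_sup_left hc), add_zero]
        exact Submodule.linearProjOfIsCompl_apply_left hc1 ⟨y, hy⟩
      have hπ2 : π₂ (y + c) = ⟨c, hc⟩ := by
        rw [map_add,
          Submodule.linearProjOfIsCompl_apply_right' hc2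
            (Submodule.mem_sup_left hy), zero_add]
        exact Submodule.linearProjOfIsCompl_apply_left hc2 ⟨c, hc⟩
      have hgx : (g ∘ₗ ((Nsub A B r).subtype ∘ₗ π₁) + h ∘ₗ π₂) (y + c) = g y + h ⟨c, hc⟩ := by
        simp [hπ1, hπ2]
      rw [hgx]
      have hsplit : A *ᵥ (y + c) - B *ᵥ (g y + h ⟨c, hc⟩)
          = (A *ᵥ y - B *ᵥ g y) + (A *ᵥ c - B *ᵥ h ⟨c, hc⟩) := by
        rw [mulVec_add, mulVec_add]
        abel
      rw [hsplit]
      refine Submodule.add_mem _ ?_ (hh ⟨c, hc⟩)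
      exact Nsub_mono A B (by omega : r - 1 ≤ (r + 1) - 1) (hg r (by omega) y hy)

end Stmt11Aux


open Stmt11Aux in
/-- There is a deadbeat gain `K` (i.e. `A - BK` nilpotent) iff the
Popov–Belevitch–Hautus condition holds for every nonzero `λ`. -/
theorem stmt_11 {n m : ℕ} (A : Matrix (Fin n) (Fin n) ℂ) (B : Matrix (Fin n) (Fin m) ℂ) :
    (∃ K : Matrix (Fin m) (Fin n) ℂ, (A - B * K) ^ n = 0) ↔
      ∀ lam : ℂ, lam ≠ 0 →
        ¬∃ w : Fin n → ℂ, w ≠ 0 ∧ w ᵥ* A = lam • w ∧ w ᵥ* B = 0 := by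
  constructor
  · rintro ⟨K, hK⟩ lam hlam ⟨w, hw0, hwA, hwB⟩
    have hM : w ᵥ* (A - B * K) = lam • w := by
      rw [vecMul_sub, hwA, ← vecMul_vecMul, hwB, zero_vecMul, sub_zero]
    have hpow : ∀ k, w ᵥ* ((A - B * K) ^ k) = lam ^ k • w := by
      intro k
      induction k with
      | zero => rw [pow_zero, vecMul_one, pow_zero, one_smul]
      | succ k ihk =>
        rw [pow_succ, ← vecMul_vecMul, ihk, smul_vecMul, hM, smul_smul, ← pow_succ]
    have h1 := hpow n
    rw [hK, vecMul_zero] at h1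
    have h2 : lam ^ n • w = 0 := h1.symm
    rcases smul_eq_zero.mp h2 with h3 | h3
    · exact pow_ne_zero n hlam h3
    · exact hw0 h3
  · intro hPBH
    rcases Nat.eq_zero_or_pos n with hn0 | hn
    · subst hn0
      refine ⟨0, ?_⟩
      rw [pow_zero]
      ext i j
      exact i.elim0
    · obtain ⟨g, hg⟩ := exists_g A B (2 * n)
      set K := LinearMap.toMatrix' g with hKdef
      have hKx : ∀ x, K *ᵥ x = g x := by
        intro x
        rw [hKdef, ← Matrix.toLin'_apply, Matrix.toLin'_toMatrix']
      refine ⟨K, ?_⟩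
      set M := A - B * K with hMdef
      have hMx : ∀ x, M *ᵥ x = A *ᵥ x - B *ᵥ g x := by
        intro x
        rw [hMdef, sub_mulVec, ← mulVec_mulVec, hKx]
      have hclaim : ∀ j, j ≤ 2 * n → ∀ x ∈ Nsub A B j, (M ^ j) *ᵥ x = 0 := by
        intro j
        induction j with
        | zero =>
          intro _ x hx
          rw [Nsub_zero, Submodule.mem_bot] at hx
          rw [pow_zero, one_mulVec]
          exact hx
        | succ j ihj =>
          intro hj x hx
          have h1 : M *ᵥ x ∈ Nsub A B j := by
            rw [hMx x]
            exact hg (j + 1) hj x hx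
          rw [pow_succ, ← mulVec_mulVec]
          exact ihj (by omega) _ h1
      have hM2n : M ^ (2 * n) = 0 := by
        have hz : ∀ x, (M ^ (2 * n)) *ᵥ x = 0 :=
          fun x => hclaim (2 * n) le_rfl x (Nsub_top A B hn hPBH x)
        ext i j
        have h4 := congrFun (hz (Pi.single j 1)) i
        rw [mulVec_single] at h4
        simpa using h4
      have hnil : IsNilpotent M.mulVecLin := by
        refine ⟨2 * n, ?_⟩
        rw [pow_mulVecLin, hM2n, Matrix.mulVecLin_zero]
      rw [LinearMap.isNilpotent_iff_charpoly] at hnil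
      have h8 : Module.finrank ℂ (Fin n → ℂ) = n := (Module.finrank_fin_fun ℂ)
      have hfn : M.mulVecLin ^ n = 0 := by
        have h6 := M.mulVecLin.aeval_self_charpoly
        rw [hnil, map_pow, aeval_X, h8] at h6
        exact h6
      ext i j
      have h7 : (M ^ n) *ᵥ Pi.single j 1 = 0 := by
        rw [← mulVecLin_apply, ← pow_mulVecLin, hfn]
        rfl
      have h9 := congrFun h7 i
      rw [mulVec_single] at h9
      simpa using h9
end

section
/- Suppose Assumptions 1 and 2 hold, with p ≥ 1 as in Assumption 1. Fix x, x̂ ∈ X, let φ(k,x) := f^k(x) denote the solution of x⁺ = f(x), and let ψ : ℕ → X be any sequence with ψ(0) = x̂ and ψ(k+1) ∈ f([ψ(k)]_0 ∩ [φ(k,x)]^-_{π(ψ(k),φ(k,x))}) for all k ∈ ℕ (in particular, for every such pair the set {j ∈ {2−p,…,0,1} : [ψ(k)]_0 ∩ [φ(k,x)]_j^- ≠ ∅} defining π is nonempty, so π and the tracker are well defined). Then ψ(k) = φ(k,x) for all k ≥ p. -/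
/-- The classes `[x]_{-k}` of the paper: `[x]_0 = μ(x,U)` and
`[x]_{-k-1} = μ([x]_{-k}^-, U)` where `[x]_{-k}^- = f⁻¹([f(x)]_{-k})`. -/
def cls {X U : Type*} (f : X → X) (μ : X → U → X) : ℕ → X → Set X
  | 0, x => Set.range (μ x)
  | k + 1, x => ⋃ y ∈ f ⁻¹' cls f μ k (f x), Set.range (μ y)

/-- The classes `[x]_{-k}^- = f⁻¹([f(x)]_{-k})` of the paper. -/
def clsm {X U : Type*} (f : X → X) (μ : X → U → X) (k : ℕ) (x : X) : Set X :=
  f ⁻¹' cls f μ k (f x)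

/-- The classes `[x]_j^-` for integer indices `j ≤ 1`: `[x]_1^- = {x}` and,
for `j ≤ 0`, `[x]_j^- = [x]_{-(-j)}^-`. -/
def clsI {X U : Type*} (f : X → X) (μ : X → U → X) (j : ℤ) (x : X) : Set X :=
  if j = 1 then {x} else clsm f μ (-j).toNat x

/-- The map `π(x̂,x) = max { j ∈ {2-p,…,0,1} : [x̂]_0 ∩ [x]_j^- ≠ ∅ }`. -/
noncomputable def piMap {X U : Type*} (f : X → X) (μ : X → U → X) (p : ℕ)
    (xhat x : X) : ℤ :=
  sSup {j : ℤ | 2 - (p : ℤ) ≤ j ∧ j ≤ 1 ∧ (cls f μ 0 xhat ∩ clsI f μ j x).Nonempty}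

/-- Main theorem: under Assumptions 1 and 2, any solution `ψ` of the tracker
`x̂⁺ ∈ f([x̂]_0 ∩ [x]^-_{π(x̂,x)})` coupled with `x⁺ = f(x)` (solution `φ(k,x) = f^k(x)`)
satisfies `ψ(k) = φ(k,x)` for all `k ≥ p`. -/
theorem stmt_12 {X U : Type*} [Nonempty X] [Nonempty U] (f : X → X) (μ : X → U → X)
    (hμ : ∀ x : X, x ∈ Set.range (μ x))
    (p : ℕ) (hp : 1 ≤ p)
    (hA1 : ∀ x : X, cls f μ (p - 1) x = Set.univ)
    (hA2 : ∀ x xhat : X, xhat ∈ cls f μ 0 x → cls f μ 0 xhat = cls f μ 0 x)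
    (x xhat : X) (ψ : ℕ → X) (hψ0 : ψ 0 = xhat)
    (hψ : ∀ k : ℕ, ψ (k + 1) ∈
      f '' (cls f μ 0 (ψ k) ∩ clsI f μ (piMap f μ p (ψ k) (f^[k] x)) (f^[k] x))) :
    ∀ k : ℕ, p ≤ k → ψ k = f^[k] x := by
    -- The "candidate index" set defining π for the pair (ψ k, f^[k] x).
  set S : ℕ → Set ℤ := fun k =>
    {j : ℤ | 2 - (p : ℤ) ≤ j ∧ j ≤ 1 ∧
      (cls f μ 0 (ψ k) ∩ clsI f μ j (f^[k] x)).Nonempty} with hS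
  have hSpi : ∀ k, piMap f μ p (ψ k) (f^[k] x) = sSup (S k) := fun k => rfl
  have hBdd : ∀ k, BddAbove (S k) := fun k => ⟨1, fun j hj => hj.2.1⟩
  have hclsI1 : ∀ z : X, clsI f μ 1 z = {z} := fun z => if_pos rfl
  -- once ψ locks onto φ, it stays locked on
  have hlock : ∀ k, ψ k = f^[k] x → ψ (k + 1) = f^[k + 1] x := by
    intro k hk
    have h1 : (1 : ℤ) ∈ S k := by
      refine ⟨by omega, le_refl _, ⟨f^[k] x, ?_, ?_⟩⟩
      · rw [hk]; exact hμ _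
      · rw [hclsI1]; rfl
    have hsup : sSup (S k) = 1 :=
      le_antisymm (csSup_le ⟨1, h1⟩ fun j hj => hj.2.1) (le_csSup (hBdd k) h1)
    obtain ⟨z, ⟨_, hz2⟩, hz⟩ := hψ k
    rw [hSpi, hsup, hclsI1] at hz2
    rw [Function.iterate_succ_apply', ← hz, hz2]
  -- main induction: either a candidate index ≥ 2 - p + k exists, or lock-on happened
  have main : ∀ k : ℕ, (∃ j ∈ S k, 2 - (p : ℤ) + k ≤ j) ∨ ψ k = f^[k] x := by
    intro k
    induction k with
    | zero =>
      left
      refine ⟨2 - (p : ℤ), ⟨le_refl _, by omega, ?_⟩, by simp⟩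
      rcases eq_or_lt_of_le hp with hp1 | hp2
      · -- p = 1 : [x̂]_0 = X by Assumption 1, and [x]_1^- = {x}
        have h2p : (2 : ℤ) - (p : ℤ) = 1 := by omega
        have h0 : cls f μ 0 (ψ 0) = Set.univ := by
          have := hA1 (ψ 0); rwa [show p - 1 = 0 by omega] at this
        exact ⟨x, by rw [h0]; trivial, by rw [h2p, hclsI1]; rfl⟩
      · -- p ≥ 2 : use [x]_{1-p} = X
        have hne : (2 : ℤ) - (p : ℤ) ≠ 1 := by omega
        have htn : (-(2 - (p : ℤ))).toNat = p - 2 := by omega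
        have hmem : ψ 0 ∈ cls f μ (p - 2 + 1) x := by
          have := hA1 x
          rw [show p - 1 = p - 2 + 1 by omega] at this
          rw [this]; trivial
        rw [show cls f μ (p - 2 + 1) x
            = ⋃ y ∈ f ⁻¹' cls f μ (p - 2) (f x), Set.range (μ y) from rfl] at hmem
        simp only [Set.mem_iUnion, exists_prop] at hmem
        obtain ⟨y, hy1, hy2⟩ := hmem
        refine ⟨y, ?_, ?_⟩
        · rw [hA2 y (ψ 0) hy2]; exact hμ y
        · rw [clsI, if_neg hne, htn]; exact hy1
    | succ k ih =>
      rcases ih with ⟨j0, hj0S, hj0ge⟩ | heq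
      · -- candidate index j0 exists at step k
        have hne : (S k).Nonempty := ⟨j0, hj0S⟩
        set π := sSup (S k) with hπ
        have hπmem : π ∈ S k := Int.csSup_mem hne (hBdd k)
        have hπge : j0 ≤ π := le_csSup (hBdd k) hj0S
        obtain ⟨z, ⟨hz1, hz2⟩, hz⟩ := hψ k
        rw [hSpi, ← hπ] at hz2
        by_cases hπ1 : π = 1
        · -- π = 1 : lock-on now
          right
          rw [hπ1, hclsI1] at hz2
          rw [Function.iterate_succ_apply', ← hz, hz2]
        · -- π ≤ 0 : the candidate index climbs by one
          left
          have hπle : π ≤ 0 := by have := hπmem.2.1; omega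
          rw [clsI, if_neg hπ1] at hz2
          have hfz : f z ∈ cls f μ (-π).toNat (f^[k + 1] x) := by
            rw [Function.iterate_succ_apply']; exact hz2
          by_cases hπ0 : π = 0
          · -- π = 0 : next index is 1
            have : f z ∈ cls f μ 0 (f^[k + 1] x) := by
              rwa [hπ0] at hfz
            refine ⟨1, ⟨by omega, le_refl _, ⟨f^[k + 1] x, ?_, ?_⟩⟩, by
              have : 2 - (p : ℤ) + k ≤ 0 := by omega
              push_cast; omega⟩
            · rw [hz] at this
              rw [hA2 _ _ this]; exact hμ _
            · rw [hclsI1]; rfl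
          · -- π ≤ -1 : next index is π + 1
            have htn : (-π).toNat = (-(π + 1)).toNat + 1 := by omega
            rw [htn] at hfz
            rw [show cls f μ ((-(π + 1)).toNat + 1) (f^[k + 1] x)
                = ⋃ y ∈ f ⁻¹' cls f μ (-(π + 1)).toNat (f (f^[k + 1] x)),
                    Set.range (μ y) from rfl] at hfz
            simp only [Set.mem_iUnion, exists_prop] at hfz
            obtain ⟨y, hy1, hy2⟩ := hfz
            refine ⟨π + 1, ⟨by have := hπmem.1; omega, by omega, ⟨y, ?_, ?_⟩⟩, by
              push_cast; omega⟩
            · rw [hz] at hy2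
              rw [hA2 y _ hy2]; exact hμ y
            · rw [clsI, if_neg (by omega : π + 1 ≠ 1)]; exact hy1
      · right; exact hlock k heq
  -- conclude: at k = p the first alternative is impossible
  have hpeq : ψ p = f^[p] x := by
    rcases main p with ⟨j, hjS, hjge⟩ | h
    · exfalso; have := hjS.2.1; omega
    · exact h
  intro k hk
  induction k, hk using Nat.le_induction with
  | base => exact hpeq
  | succ n _ ih => exact hlock n ih
end

section
/- Suppose Assumptions 1 and 2 hold, with p ≥ 1 as in Assumption 1. Let ℓ ∈ {0,1,…,p−2} and x, x̂ ∈ X with x̂ ∈ [x]_{-ℓ-1}. Then [x̂]_0 ∩ [x]^-_{-ℓ} ≠ ∅, hence π(x̂,x) ≥ −ℓ, and every point x̂⁺ ∈ f([x̂]_0 ∩ [x]^-_{π(x̂,x)}) satisfies x̂⁺ ∈ [f(x)]_{-ℓ}. -/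
lemma mem_cls_self {X U : Type*} (f : X → X) (μ : X → U → X)
    (hμ : ∀ x : X, x ∈ Set.range (μ x)) : ∀ (k : ℕ) (x : X), x ∈ cls f μ k x := by
  intro k
  induction k with
  | zero => exact hμ
  | succ k ih =>
    intro x
    show x ∈ ⋃ y ∈ f ⁻¹' cls f μ k (f x), Set.range (μ y)
    exact Set.mem_biUnion (ih (f x)) (hμ x)

lemma cls_succ_subset {X U : Type*} (f : X → X) (μ : X → U → X)
    (hμ : ∀ x : X, x ∈ Set.range (μ x)) :
    ∀ (k : ℕ) (x : X), cls f μ k x ⊆ cls f μ (k + 1) x := by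
  intro k
  induction k with
  | zero =>
    intro x w hw
    show w ∈ ⋃ y ∈ f ⁻¹' cls f μ 0 (f x), Set.range (μ y)
    exact Set.mem_biUnion (mem_cls_self f μ hμ 0 (f x)) hw
  | succ k ih =>
    intro x w hw
    show w ∈ ⋃ y ∈ f ⁻¹' cls f μ (k + 1) (f x), Set.range (μ y)
    obtain ⟨y, hy, hwy⟩ := Set.mem_iUnion₂.mp hw
    exact Set.mem_biUnion (ih (f x) hy) hwy

lemma cls_mono {X U : Type*} (f : X → X) (μ : X → U → X)
    (hμ : ∀ x : X, x ∈ Set.range (μ x)) {k m : ℕ} (hkm : k ≤ m) (x : X) :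
    cls f μ k x ⊆ cls f μ m x := by
  induction m with
  | zero => simpa [Nat.le_zero.mp hkm]
  | succ m ih =>
    rcases Nat.lt_or_ge k (m + 1) with h | h
    · exact (ih (Nat.lt_succ_iff.mp h)).trans (cls_succ_subset f μ hμ m x)
    · have : k = m + 1 := le_antisymm hkm h
      simp [this]

/-- The key claim: under Assumptions 1 and 2, if `ℓ ∈ {0,…,p-2}` and `x̂ ∈ [x]_{-ℓ-1}`,
then `[x̂]_0 ∩ [x]^-_{-ℓ} ≠ ∅`, hence `π(x̂,x) ≥ -ℓ`, and every
`x̂⁺ ∈ f([x̂]_0 ∩ [x]^-_{π(x̂,x)})` lies in `[f(x)]_{-ℓ}`. -/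
theorem stmt_13 {X U : Type*} [Nonempty X] [Nonempty U] (f : X → X) (μ : X → U → X)
    (hμ : ∀ x : X, x ∈ Set.range (μ x))
    (p : ℕ) (hp : 1 ≤ p)
    (hA1 : ∀ x : X, cls f μ (p - 1) x = Set.univ)
    (hA2 : ∀ x xhat : X, xhat ∈ cls f μ 0 x → cls f μ 0 xhat = cls f μ 0 x)
    (ℓ : ℕ) (hℓ : ℓ + 2 ≤ p) (x xhat : X) (hxhat : xhat ∈ cls f μ (ℓ + 1) x) :
    (cls f μ 0 xhat ∩ clsm f μ ℓ x).Nonempty ∧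
      -(ℓ : ℤ) ≤ piMap f μ p xhat x ∧
      ∀ xhatp ∈ f '' (cls f μ 0 xhat ∩ clsI f μ (piMap f μ p xhat x) x),
        xhatp ∈ cls f μ ℓ (f x) := by
  -- Part 1
  have hxhat' : xhat ∈ ⋃ y ∈ f ⁻¹' cls f μ ℓ (f x), Set.range (μ y) := hxhat
  obtain ⟨y, hy, hxy⟩ := Set.mem_iUnion₂.mp hxhat'
  have hy0 : y ∈ cls f μ 0 xhat := by
    rw [hA2 y xhat hxy]; exact hμ y
  have h1 : (cls f μ 0 xhat ∩ clsm f μ ℓ x).Nonempty := ⟨y, hy0, hy⟩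
  refine ⟨h1, ?_⟩
  set S := {j : ℤ | 2 - (p : ℤ) ≤ j ∧ j ≤ 1 ∧ (cls f μ 0 xhat ∩ clsI f μ j x).Nonempty}
    with hS
  have hmem : -(ℓ : ℤ) ∈ S := by
    refine ⟨by omega, by omega, ?_⟩
    have hne : (-(ℓ : ℤ)) ≠ 1 := by omega
    simpa [clsI, hne] using h1
  have hbdd : BddAbove S := ⟨1, fun j hj => hj.2.1⟩
  have hle : -(ℓ : ℤ) ≤ piMap f μ p xhat x := le_csSup hbdd hmem
  refine ⟨hle, ?_⟩
  have hπmem : piMap f μ p xhat x ∈ S :=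
    Int.csSup_mem ⟨_, hmem⟩ hbdd
  obtain ⟨-, hπ1, -⟩ := hπmem
  intro xhatp hxhatp
  obtain ⟨z, ⟨hz0, hzI⟩, rfl⟩ := hxhatp
  by_cases hπ : piMap f μ p xhat x = 1
  · rw [hπ] at hzI
    simp only [clsI, if_pos rfl, Set.mem_singleton_iff] at hzI
    subst hzI
    exact mem_cls_self f μ hμ ℓ (f z)
  · simp only [clsI, if_neg hπ, clsm, Set.mem_preimage] at hzI
    have hm : (-piMap f μ p xhat x).toNat ≤ ℓ := by omega
    exact cls_mono f μ hμ hm (f x) hzI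
end

section
/- Suppose the map μ satisfies x ∈ μ(x,U) for all x, and Assumption 2 holds. Let ℓ ≥ 0 and x, x̂ ∈ X with x̂ ∈ [x]_{-ℓ-1}. Then there exists η ∈ [x̂]_0 ∩ [x]^-_{-ℓ}; in particular [x̂]_0 ∩ [x]^-_{-ℓ} is nonempty. -/
/-- If `x ∈ μ(x,U)` for all `x`, Assumption 2 holds, and `x̂ ∈ [x]_{-ℓ-1}`, then there
exists `η ∈ [x̂]_0 ∩ [x]^-_{-ℓ}`; in particular `[x̂]_0 ∩ [x]^-_{-ℓ}` is nonempty. -/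
theorem stmt_14 {X U : Type*} [Nonempty X] [Nonempty U] (f : X → X) (μ : X → U → X)
    (hμ : ∀ x : X, x ∈ Set.range (μ x))
    (hA2 : ∀ x xhat : X, xhat ∈ cls f μ 0 x → cls f μ 0 xhat = cls f μ 0 x)
    (ℓ : ℕ) (x xhat : X) (hxhat : xhat ∈ cls f μ (ℓ + 1) x) :
    (∃ η : X, η ∈ cls f μ 0 xhat ∩ clsm f μ ℓ x) ∧
      (cls f μ 0 xhat ∩ clsm f μ ℓ x).Nonempty := by
  simp only [cls, Set.mem_iUnion] at hxhat
  obtain ⟨y, hy, hx⟩ := hxhat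
  have h2 := hA2 y xhat hx
  refine ⟨⟨y, ?_⟩, ⟨y, ?_⟩⟩ <;> exact ⟨h2 ▸ hμ y, hy⟩
end
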